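/- Define the endomorphism J_{E₀} on sections of E₀ by J_{E₀}(X₁^i) = −X₂^i and J_{E₀}(X₂^i) = X₁^i for i ∈ {1,2}, extended C^∞(ℝ²)-linearly. Then J_{E₀}² = −id, and the Nijenhuis tensor N(X,Y) = [J_{E₀}X, J_{E₀}Y]_{E₀} − J_{E₀}[X, J_{E₀}Y]_{E₀} − J_{E₀}[J_{E₀}X, Y]_{E₀} − [X,Y]_{E₀} vanishes identically: N(X,Y) = 0 for all sections X, Y of E₀. That is, the almost complex structure J_{E₀} on the almost Lie algebroid E₀ is integrable. -/

import Mathlib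

noncomputable section

set_option maxHeartbeats 1000000
set_option synthInstance.maxHeartbeats 400000

open Matrix

/-- The ℝ-algebra of smooth (C^∞) functions on ℝ². -/
def Sm : Subalgebra ℝ ((ℝ × ℝ) → ℝ) where
  carrier := {f | ContDiff ℝ (⊤ : ℕ∞) f}
  mul_mem' := fun {a b} (hf : ContDiff ℝ (⊤ : ℕ∞) a) (hg : ContDiff ℝ (⊤ : ℕ∞) b) => hf.mul hg
  add_mem' := fun {a b} (hf : ContDiff ℝ (⊤ : ℕ∞) a) (hg : ContDiff ℝ (⊤ : ℕ∞) b) => hf.add hg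
  algebraMap_mem' r :=
    show ContDiff ℝ (⊤ : ℕ∞) (algebraMap ℝ ((ℝ × ℝ) → ℝ) r) from contDiff_const

/-- Smooth functions on the plane. -/
abbrev S : Type := Sm

lemma mem_Sm_iff {f : (ℝ × ℝ) → ℝ} : f ∈ Sm ↔ ContDiff ℝ (⊤ : ℕ∞) f := by
  rw [Sm]; rfl

lemma smooth_coe (f : S) : ContDiff ℝ (⊤ : ℕ∞) (f : (ℝ × ℝ) → ℝ) := mem_Sm_iff.mp f.2

/-- Sections of the trivial bundle `ℝ² × M₂(ℝ)`, as 2×2 matrices of smooth functions. -/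
abbrev E₀ : Type := Matrix (Fin 2) (Fin 2) S

/-- The section `X_j^i`: the constant elementary matrix with 1 in entry (i,j). -/
def sb (i j : Fin 2) : E₀ := Matrix.single i j 1

/-- First coordinate function. -/
def x₁ : S := ⟨fun p => p.1, mem_Sm_iff.mpr contDiff_fst⟩
/-- Second coordinate function. -/
def x₂ : S := ⟨fun p => p.2, mem_Sm_iff.mpr contDiff_snd⟩
/-- Coordinates. -/
def xc : Fin 2 → S := ![x₁, x₂]

/-- Directional derivative of a smooth function, in direction `v`. -/
def pdAux (v : ℝ × ℝ) (f : S) : S :=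
  ⟨fun p => fderiv ℝ (f : (ℝ × ℝ) → ℝ) p v,
    mem_Sm_iff.mpr (((smooth_coe f).fderiv_right (le_refl _)).clm_apply contDiff_const)⟩

/-- The vector field (derivation) `∂/∂v` on `ℝ²`. -/
def pd (v : ℝ × ℝ) : Derivation ℝ S S where
  toFun := pdAux v
  map_add' f g := by
    ext p
    have hf : DifferentiableAt ℝ (f : (ℝ × ℝ) → ℝ) p :=
      ((smooth_coe f).differentiable (by simp)).differentiableAt
    have hg : DifferentiableAt ℝ (g : (ℝ × ℝ) → ℝ) p :=
      ((smooth_coe g).differentiable (by simp)).differentiableAt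
    have h1 : ((f + g : S) : (ℝ × ℝ) → ℝ) = fun q => (f : (ℝ × ℝ) → ℝ) q + (g : (ℝ × ℝ) → ℝ) q := rfl
    simp only [pdAux, h1, AddMemClass.coe_add, Pi.add_apply]
    rw [show (fun q => (f : (ℝ × ℝ) → ℝ) q + (g : (ℝ × ℝ) → ℝ) q) = (f : (ℝ × ℝ) → ℝ) + (g : (ℝ × ℝ) → ℝ) from rfl, fderiv_add hf hg]
    simp
  map_smul' c f := by
    ext p
    have h1 : ((c • f : S) : (ℝ × ℝ) → ℝ) = fun q => c * (f : (ℝ × ℝ) → ℝ) q := rfl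
    have hf : DifferentiableAt ℝ (f : (ℝ × ℝ) → ℝ) p :=
      ((smooth_coe f).differentiable (by simp)).differentiableAt
    simp only [pdAux]
    rw [h1, fderiv_const_mul hf]
    simp
  map_one_eq_zero' := by
    ext p
    have h1 : ((1 : S) : (ℝ × ℝ) → ℝ) = fun _ => (1 : ℝ) := rfl
    have h2 : fderiv ℝ (1 : (ℝ × ℝ) → ℝ) p = 0 := fderiv_const_apply 1
    simp [pdAux, h1, h2]
  leibniz' f g := by
    ext p
    have hf : DifferentiableAt ℝ (f : (ℝ × ℝ) → ℝ) p :=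
      ((smooth_coe f).differentiable (by simp)).differentiableAt
    have hg : DifferentiableAt ℝ (g : (ℝ × ℝ) → ℝ) p :=
      ((smooth_coe g).differentiable (by simp)).differentiableAt
    have h1 : ((f * g : S) : (ℝ × ℝ) → ℝ) = fun q => (f : (ℝ × ℝ) → ℝ) q * (g : (ℝ × ℝ) → ℝ) q := rfl
    simp [pdAux, h1, fderiv_mul hf hg]
    rw [show (fun q => (f : (ℝ × ℝ) → ℝ) q * (g : (ℝ × ℝ) → ℝ) q) = (f : (ℝ × ℝ) → ℝ) * (g : (ℝ × ℝ) → ℝ) from rfl, fderiv_mul hf hg]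
    simp
    try ring

/-- Standard basis vectors of ℝ². -/
def ev : Fin 2 → ℝ × ℝ := ![(1, 0), (0, 1)]

/-- The anchor `ρ` of `E₀`: `ρ(X_j^i) = (x^i)² ∂/∂x^j`, extended `C^∞(ℝ²)`-linearly. -/
def anchor (X : E₀) : Derivation ℝ S S :=
  ∑ i : Fin 2, ∑ j : Fin 2, (X i j * xc i ^ 2) • pd (ev j)

/-- The section `𝒳₁ = (x²)² X₁¹ − (x¹)² X₁²`. -/
def 𝓧₁ : E₀ := x₂ ^ 2 • sb 0 0 - x₁ ^ 2 • sb 1 0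
/-- The section `𝒳₂ = (x²)² X₂¹ − (x¹)² X₂²`. -/
def 𝓧₂ : E₀ := x₂ ^ 2 • sb 0 1 - x₁ ^ 2 • sb 1 1

/-- The almost Lie bracket axioms for `(E₀, ρ)`, together with the defining values
`[X_j^i, X_l^k] = 2x^k δ_j^k X_l^i − 2x^i δ_l^i X_j^k` on the generators: ℝ-bilinearity,
skew-symmetry, the Leibniz rule, and the values on generators. -/
def IsBracket (L : E₀ → E₀ → E₀) : Prop :=
  (∀ X X' Y, L (X + X') Y = L X Y + L X' Y) ∧
  (∀ X Y Y', L X (Y + Y') = L X Y + L X Y') ∧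
  (∀ (c : ℝ) (X Y : E₀), L (c • X) Y = c • L X Y) ∧
  (∀ (c : ℝ) (X Y : E₀), L X (c • Y) = c • L X Y) ∧
  (∀ X Y, L Y X = - L X Y) ∧
  (∀ (f : S) (X Y : E₀), L X (f • Y) = anchor X f • Y + f • L X Y) ∧
  (∀ i j k l, L (sb i j) (sb k l) =
    (if j = k then (2 : S) * xc k else 0) • sb i l
      - (if l = i then (2 : S) * xc i else 0) • sb k j)


/-- The almost complex endomorphism `J_{E₀}`: `J(X₁^i) = −X₂^i`, `J(X₂^i) = X₁^i`,
extended `C^∞(ℝ²)`-linearly. -/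
def Jm (X : E₀) : E₀ := Matrix.of fun i j => if j = 0 then X i 1 else - X i 0

/-! ### Auxiliary lemmas for statement16 -/

lemma Jm_add (X Y : E₀) : Jm (X + Y) = Jm X + Jm Y := by
  ext a b
  fin_cases b <;> simp [Jm] <;> ring

lemma Jm_smul (f : S) (X : E₀) : Jm (f • X) = f • Jm X := by
  ext a b
  fin_cases b <;> simp [Jm, smul_eq_mul] <;> ring

lemma Jm_neg (X : E₀) : Jm (-X) = - Jm X := by
  ext a b
  fin_cases b <;> simp [Jm]

lemma Jm_sub (X Y : E₀) : Jm (X - Y) = Jm X - Jm Y := by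
  rw [sub_eq_add_neg, Jm_add, Jm_neg, sub_eq_add_neg]

lemma Jm_Jm (X : E₀) : Jm (Jm X) = - X := by
  ext a b
  fin_cases b <;> simp [Jm]

lemma Jm_sb0 (i : Fin 2) : Jm (sb i 0) = -(sb i 1) := by
  ext a b
  fin_cases b <;> simp [Jm, sb, Matrix.single]

lemma Jm_sb1 (i : Fin 2) : Jm (sb i 1) = sb i 0 := by
  ext a b
  fin_cases b <;> simp [Jm, sb, Matrix.single]

/-- The Nijenhuis tensor expression. -/
def Nt (L : E₀ → E₀ → E₀) (X Y : E₀) : E₀ :=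
  L (Jm X) (Jm Y) - Jm (L X (Jm Y)) - Jm (L (Jm X) Y) - L X Y

section BracketLemmas

variable {L : E₀ → E₀ → E₀} (hL : IsBracket L)
include hL

lemma L_neg_left (X Y : E₀) : L (-X) Y = - L X Y := by
  rw [← neg_one_smul ℝ X, hL.2.2.1]; module

lemma L_neg_right (X Y : E₀) : L X (-Y) = - L X Y := by
  rw [← neg_one_smul ℝ Y, hL.2.2.2.1]; module

lemma Nt_skew (X Y : E₀) : Nt L Y X = - Nt L X Y := by
  unfold Nt
  rw [hL.2.2.2.2.1 (Jm X) (Jm Y), hL.2.2.2.2.1 X (Jm Y), hL.2.2.2.2.1 (Jm X) Y,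
    hL.2.2.2.2.1 X Y]
  simp only [Jm_neg]
  abel

lemma Nt_add_right (X Y Y' : E₀) : Nt L X (Y + Y') = Nt L X Y + Nt L X Y' := by
  unfold Nt
  simp only [Jm_add, hL.2.1]
  abel

lemma Nt_smul_right (f : S) (X Y : E₀) : Nt L X (f • Y) = f • Nt L X Y := by
  unfold Nt
  simp only [Jm_smul, hL.2.2.2.2.2.1, Jm_add, Jm_smul, Jm_Jm, smul_neg, smul_sub]
  abel

lemma Nt_add_left (X X' Y : E₀) : Nt L (X + X') Y = Nt L X Y + Nt L X' Y := by
  rw [Nt_skew hL Y (X + X'), Nt_add_right hL Y X X', Nt_skew hL Y X, Nt_skew hL Y X']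
  abel

lemma Nt_smul_left (f : S) (X Y : E₀) : Nt L (f • X) Y = f • Nt L X Y := by
  rw [Nt_skew hL Y (f • X), Nt_smul_right hL f Y X, Nt_skew hL Y X]
  simp only [smul_neg, neg_neg]

lemma Nt_gen (i j k l : Fin 2) : Nt L (sb i j) (sb k l) = 0 := by
  have hgen := hL.2.2.2.2.2.2
  unfold Nt
  fin_cases j <;> fin_cases l <;>
    simp only [Fin.zero_eta, Fin.mk_one, Fin.isValue, Jm_sb0, Jm_sb1, L_neg_left hL,
      L_neg_right hL, Jm_neg, Jm_sub, Jm_smul, hgen, Jm_sb0, Jm_sb1, smul_neg, neg_neg,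
      neg_sub, sub_neg_eq_add] <;>
    abel

end BracketLemmas

lemma decompE (X : E₀) :
    X = X 0 0 • sb 0 0 + X 0 1 • sb 0 1 + X 1 0 • sb 1 0 + X 1 1 • sb 1 1 := by
  ext a b
  fin_cases a <;> fin_cases b <;>
    simp [sb, Matrix.single, smul_eq_mul]

/-- `J_{E₀}² = −id` and the Nijenhuis tensor of `J_{E₀}` with respect to the
bracket `[·,·]_{E₀}` vanishes identically, i.e. the almost complex structure `J_{E₀}` on the
almost Lie algebroid `E₀` is integrable. -/
theorem statement16 (L : E₀ → E₀ → E₀) (hL : IsBracket L) :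
    (∀ X : E₀, Jm (Jm X) = - X) ∧
    (∀ X Y : E₀, L (Jm X) (Jm Y) - Jm (L X (Jm Y)) - Jm (L (Jm X) Y) - L X Y = 0) := by
  constructor
  · exact Jm_Jm
  · intro X Y
    show Nt L X Y = 0
    rw [decompE X, decompE Y]
    simp only [Nt_add_left hL, Nt_add_right hL, Nt_smul_left hL, Nt_smul_right hL,
      Nt_gen hL, smul_zero, add_zero]
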